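/- Let γ : I → ℝ³ be a unit-speed curve satisfying γ''(s) = q · (γ(s) × γ'(s)) with q ≠ 0 and |γ''| never vanishing. Then γ(s) = (s + a₀)·γ'(s) + (1/q)·(γ'(s) × γ''(s)) for some constant a₀, i.e., the position vector lies in the rectifying plane at each point. -/

import Mathlib

def dot3 (u v : Fin 3 → ℝ) : ℝ := ∑ i, u i * v i

/-- A unit-speed conformal trajectory of the radial field with nonvanishing
curvature satisfies `γ = (s+a₀) γ' + (1/q) γ' × γ''`. -/
theorem stmt5 (I : Set ℝ) (hI : IsOpen I) (hconv : Convex ℝ I) (q : ℝ) (hq : q ≠ 0)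
    (γ g g' : ℝ → (Fin 3 → ℝ))
    (hd1 : ∀ s ∈ I, HasDerivAt γ (g s) s)
    (hd2 : ∀ s ∈ I, HasDerivAt g (g' s) s)
    (hunit : ∀ s ∈ I, dot3 (g s) (g s) = 1)
    (hcurv : ∀ s ∈ I, g' s ≠ 0)
    (heq : ∀ s ∈ I, g' s = q • crossProduct (γ s) (g s)) :
    ∃ a₀ : ℝ, ∀ s ∈ I,
      γ s = (s + a₀) • g s + q⁻¹ • crossProduct (g s) (g' s) := by
  rcases Set.eq_empty_or_nonempty I with hIe | ⟨s₀, hs₀⟩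
  · exact ⟨0, fun s hs => absurd hs (by simp [hIe])⟩
  set F : ℝ → ℝ := fun s => dot3 (γ s) (g s) - s with hF
  have hdF : ∀ s ∈ I, HasDerivAt F 0 s := by
    intro s hs
    have h1 := hasDerivAt_pi.mp (hd1 s hs)
    have h2 := hasDerivAt_pi.mp (hd2 s hs)
    have hdot : HasDerivAt (fun t => dot3 (γ t) (g t))
        (dot3 (g s) (g s) + dot3 (γ s) (g' s)) s := by
      have : HasDerivAt (fun t => dot3 (γ t) (g t))
          (∑ i, (g s i * g s i + γ s i * g' s i)) s := by
        apply HasDerivAt.fun_sum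
        intro i _
        exact (h1 i).mul (h2 i)
      simpa [dot3, Finset.sum_add_distrib] using this
    have hperp : dot3 (γ s) (g' s) = 0 := by
      rw [heq s hs]
      simp [dot3, crossProduct, Fin.sum_univ_three]
      ring
    have : dot3 (g s) (g s) + dot3 (γ s) (g' s) - 1 = 0 := by
      rw [hperp, hunit s hs]; ring
    simpa [hF, this] using hdot.fun_sub (hasDerivAt_id s)
  have hdiff : DifferentiableOn ℝ F I := fun s hs =>
    (hdF s hs).differentiableAt.differentiableWithinAt
  have hfd : ∀ s ∈ I, fderivWithin ℝ F I s = 0 := by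
    intro s hs
    rw [fderivWithin_of_isOpen hI hs, (hdF s hs).hasFDerivAt.fderiv]
    ext; simp
  refine ⟨F s₀, fun s hs => ?_⟩
  have hconst : F s = F s₀ :=
    hconv.is_const_of_fderivWithin_eq_zero hdiff hfd hs hs₀
  have hdotval : dot3 (γ s) (g s) = s + F s₀ := by
    have : F s = dot3 (γ s) (g s) - s := rfl
    linarith [hconst, this]
  have hu := hunit s hs
  rw [heq s hs]
  have hcs : (crossProduct (g s)) (q • (crossProduct (γ s)) (g s))
      = q • (crossProduct (g s)) ((crossProduct (γ s)) (g s)) := by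
    simp
  rw [hcs, smul_smul, inv_mul_cancel₀ hq, one_smul]
  funext i
  have hu' : g s 0 * g s 0 + g s 1 * g s 1 + g s 2 * g s 2 = 1 := by
    simpa [dot3, Fin.sum_univ_three] using hu
  have hd' : γ s 0 * g s 0 + γ s 1 * g s 1 + γ s 2 * g s 2 = s + F s₀ := by
    simpa [dot3, Fin.sum_univ_three] using hdotval
  fin_cases i
  · simp [crossProduct, Pi.add_apply, Pi.smul_apply, smul_eq_mul]
    linear_combination (g s 0) * hd' - (γ s 0) * hu'
  · simp [crossProduct, Pi.add_apply, Pi.smul_apply, smul_eq_mul]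
    linear_combination (g s 1) * hd' - (γ s 1) * hu'
  · simp [crossProduct, Pi.add_apply, Pi.smul_apply, smul_eq_mul]
    linear_combination (g s 2) * hd' - (γ s 2) * hu'
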